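/- arXiv:2012.05646 — 3 statements merged into one kernel-verified Lean document; each statement's English description precedes it below -/
import Mathlib

section
/- Let N ≥ 1, let a : {1,…,N} → ℂ be complex amplitudes, and let the frequencies be evenly spaced: fₙ = f_c + n·Δf for n = 1,…,N, with Δf > 0 and f_c > N·Δf. Define y(t) = Σₙ Re(aₙ·exp(2πi fₙ t)). Then the limit as T → ∞ of (1/T) ∫₀ᵀ y(t)⁴ dt equals (3/8) Σ_{(n₁,n₂,n₃,n₄): n₁+n₂=n₃+n₄} a_{n₁}·a_{n₂}·conj(a_{n₃})·conj(a_{n₄}), where the sum ranges over all quadruples (n₁,n₂,n₃,n₄) in {1,…,N}⁴ with n₁+n₂ = n₃+n₄. -/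
open Filter Complex

noncomputable def EE (f t : ℝ) : ℂ := Complex.exp (2 * Real.pi * Complex.I * f * t)

lemma EE_cont (f : ℝ) : Continuous (EE f) := by unfold EE; fun_prop

lemma EE_mul (f g t : ℝ) : EE f t * EE g t = EE (f + g) t := by
  unfold EE; rw [← Complex.exp_add]; push_cast; ring_nf

noncomputable def cc (a : ℕ → ℂ) (p : ℕ × Bool) : ℂ :=
  if p.2 then a p.1 / 2 else (starRingEnd ℂ) (a p.1) / 2

noncomputable def ph (fc Δf : ℝ) (p : ℕ × Bool) : ℝ :=
  if p.2 then fc + p.1 * Δf else -(fc + p.1 * Δf)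

noncomputable def KK (g : ℝ) : ℂ := if g = 0 then 1 else 0

lemma avg_EE (g : ℝ) :
    Tendsto (fun T : ℝ => (1 / (T : ℂ)) * ∫ t in (0:ℝ)..T, EE g t) atTop (nhds (KK g)) := by
  by_cases hg : g = 0
  · subst hg
    have h1 : ∀ᶠ T : ℝ in atTop, (1 / (T : ℂ)) * ∫ t in (0:ℝ)..T, EE 0 t = 1 := by
      filter_upwards [eventually_ge_atTop (1:ℝ)] with T hT
      have hT0 : (T : ℂ) ≠ 0 := by
        simp only [ne_eq, Complex.ofReal_eq_zero]; linarith
      simp [EE, intervalIntegral.integral_const]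
      field_simp
    rw [show KK 0 = 1 by simp [KK]]
    exact tendsto_const_nhds.congr' (h1.mono fun x hx => hx.symm)
  · have hc : (2 * (Real.pi:ℂ) * Complex.I * g) ≠ 0 := by
      simp [Complex.ext_iff, Real.pi_ne_zero, hg, Complex.I_ne_zero]
    rw [show KK g = 0 by simp [KK, hg]]
    have key : ∀ T : ℝ, (∫ t in (0:ℝ)..T, EE g t)
        = (Complex.exp (2 * Real.pi * Complex.I * g * T) - 1) / (2 * Real.pi * Complex.I * g) := by
      intro T
      have := integral_exp_mul_complex (a := 0) (b := T) hc
      simpa [EE, mul_assoc] using this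
    apply squeeze_zero_norm' (a := fun T => (2 / ‖(2 * Real.pi * Complex.I * g : ℂ)‖) * (1/T))
    · filter_upwards [eventually_gt_atTop (0:ℝ)] with T hT
      rw [key T]
      have habs : ‖Complex.exp (2 * Real.pi * Complex.I * g * T) - 1‖ ≤ 2 := by
        calc ‖Complex.exp (2 * Real.pi * Complex.I * g * T) - 1‖
            ≤ ‖Complex.exp (2 * Real.pi * Complex.I * g * T)‖ + 1 := by
              simpa using norm_sub_le _ (1:ℂ)
          _ ≤ 2 := by
              have : (2 * (Real.pi:ℂ) * Complex.I * g * T) = ((2 * Real.pi * g * T : ℝ) : ℂ) * Complex.I := by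
                push_cast; ring
              rw [this, Complex.norm_exp_ofReal_mul_I]; norm_num
      have h2 : ‖(1 / (T : ℂ)) * ((Complex.exp (2 * Real.pi * Complex.I * g * T) - 1) / (2 * Real.pi * Complex.I * g))‖
          = (1/T) * (‖Complex.exp (2 * Real.pi * Complex.I * g * T) - 1‖ / ‖(2 * Real.pi * Complex.I * g : ℂ)‖) := by
        simp [norm_mul, norm_div, Complex.norm_real, abs_of_pos hT]
      rw [h2, mul_comm]
      gcongr
    · simpa [one_div] using tendsto_inv_atTop_zero.const_mul (2 / ‖2 * Real.pi * Complex.I * (g:ℂ)‖)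

lemma sum_sq' {α : Type*} (s : Finset α) (h : α → ℂ) :
    (∑ x ∈ s, h x) ^ 2 = ∑ p ∈ s ×ˢ s, h p.1 * h p.2 := by
  rw [sq, Finset.sum_mul_sum, Finset.sum_product]

lemma sum_pow_four {α : Type*} (s : Finset α) (h : α → ℂ) :
    (∑ x ∈ s, h x) ^ 4 =
    ∑ q ∈ (s ×ˢ s) ×ˢ (s ×ˢ s), h q.1.1 * h q.1.2 * h q.2.1 * h q.2.2 := by
  rw [show (4:ℕ) = 2 * 2 by rfl, pow_mul, sum_sq' s h,
    sum_sq' (s ×ˢ s) (fun p => h p.1 * h p.2)]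
  exact Finset.sum_congr rfl fun q _ => by ring

lemma point1 (a : ℕ → ℂ) (fc Δf : ℝ) (n : ℕ) (t : ℝ) :
    (((a n * Complex.exp
        (2 * (Real.pi : ℂ) * Complex.I * ((fc + (n : ℝ) * Δf : ℝ) : ℂ) * (t : ℂ))).re : ℝ) : ℂ)
    = cc a (n, true) * EE (ph fc Δf (n, true)) t
      + cc a (n, false) * EE (ph fc Δf (n, false)) t := by
  have key : ∀ z : ℂ, ((z.re : ℝ) : ℂ) = (z + (starRingEnd ℂ) z) / 2 := by
    intro z; rw [Complex.add_conj]; push_cast; ring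
  rw [key]
  simp only [cc, ph, if_pos, if_neg, Bool.false_eq_true, not_false_iff, ite_true, ite_false]
  rw [map_mul, ← Complex.exp_conj]
  have hconj : (starRingEnd ℂ) (2 * (Real.pi : ℂ) * Complex.I * ((fc + (n : ℝ) * Δf : ℝ) : ℂ) * (t : ℂ))
      = 2 * (Real.pi : ℂ) * Complex.I * ((-(fc + (n : ℝ) * Δf) : ℝ) : ℂ) * (t : ℂ) := by
    simp [Complex.ext_iff]
    ring
  rw [hconj]
  unfold EE
  push_cast
  ring_nf

lemma point (N : ℕ) (a : ℕ → ℂ) (fc Δf : ℝ) (t : ℝ) :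
    (((∑ n ∈ Finset.Icc 1 N,
          (a n * Complex.exp
            (2 * (Real.pi : ℂ) * Complex.I * ((fc + (n : ℝ) * Δf : ℝ) : ℂ) * (t : ℂ))).re) ^ 4
        : ℝ) : ℂ)
    = ∑ q ∈ (((Finset.Icc 1 N) ×ˢ (Finset.univ : Finset Bool)) ×ˢ
          ((Finset.Icc 1 N) ×ˢ (Finset.univ : Finset Bool))) ×ˢ
        (((Finset.Icc 1 N) ×ˢ (Finset.univ : Finset Bool)) ×ˢ
          ((Finset.Icc 1 N) ×ˢ (Finset.univ : Finset Bool))),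
        (cc a q.1.1 * cc a q.1.2 * cc a q.2.1 * cc a q.2.2) *
          EE (ph fc Δf q.1.1 + ph fc Δf q.1.2 + ph fc Δf q.2.1 + ph fc Δf q.2.2) t := by
  rw [Complex.ofReal_pow, Complex.ofReal_sum]
  have h1 : ((∑ n ∈ Finset.Icc 1 N,
        ((a n * Complex.exp
          (2 * (Real.pi : ℂ) * Complex.I * ((fc + (n : ℝ) * Δf : ℝ) : ℂ) * (t : ℂ))).re : ℂ)))
      = ∑ p ∈ (Finset.Icc 1 N) ×ˢ (Finset.univ : Finset Bool),
          cc a p * EE (ph fc Δf p) t := by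
    rw [Finset.sum_product]
    refine Finset.sum_congr rfl fun n _ => ?_
    rw [Fintype.sum_bool]
    rw [show (((a n * Complex.exp
          (2 * (Real.pi : ℂ) * Complex.I * ((fc + (n : ℝ) * Δf : ℝ) : ℂ) * (t : ℂ))).re : ℂ))
        = (((a n * Complex.exp
          (2 * (Real.pi : ℂ) * Complex.I * ((fc + (n : ℝ) * Δf : ℝ) : ℂ) * (t : ℂ))).re : ℝ) : ℂ) by norm_cast]
    rw [point1]
  rw [h1, sum_pow_four]
  refine Finset.sum_congr rfl fun q _ => ?_
  rw [← EE_mul, ← EE_mul, ← EE_mul]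
  ring

noncomputable def TT (a : ℕ → ℂ) (fc Δf : ℝ) (N : ℕ) (b1 b2 b3 b4 : Bool) : ℂ :=
  ∑ n1 ∈ Finset.Icc 1 N, ∑ n2 ∈ Finset.Icc 1 N, ∑ n3 ∈ Finset.Icc 1 N, ∑ n4 ∈ Finset.Icc 1 N,
    cc a (n1,b1) * cc a (n2,b2) * cc a (n3,b3) * cc a (n4,b4) *
      KK (ph fc Δf (n1,b1) + ph fc Δf (n2,b2) + ph fc Δf (n3,b3) + ph fc Δf (n4,b4))

lemma TT_zero (a : ℕ → ℂ) (fc Δf : ℝ) (N : ℕ) (hΔ : 0 < Δf) (hfc : (N : ℝ) * Δf < fc)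
    (b1 b2 b3 b4 : Bool)
    (hb : ((if b1 then 1 else 0) + (if b2 then 1 else 0) + (if b3 then 1 else 0)
      + (if b4 then 1 else 0) : ℤ) ≠ 2) :
    TT a fc Δf N b1 b2 b3 b4 = 0 := by
  unfold TT
  refine Finset.sum_eq_zero fun n1 h1 => Finset.sum_eq_zero fun n2 h2 =>
    Finset.sum_eq_zero fun n3 h3 => Finset.sum_eq_zero fun n4 h4 => ?_
  simp only [Finset.mem_Icc] at h1 h2 h3 h4
  have u1a : Δf ≤ (n1:ℝ)*Δf := by nlinarith [show (1:ℝ) ≤ (n1:ℝ) from by exact_mod_cast h1.1]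
  have u1b : (n1:ℝ)*Δf ≤ (N:ℝ)*Δf := by nlinarith [show ((n1:ℝ) ≤ (N:ℝ)) from by exact_mod_cast h1.2]
  have u2a : Δf ≤ (n2:ℝ)*Δf := by nlinarith [show (1:ℝ) ≤ (n2:ℝ) from by exact_mod_cast h2.1]
  have u2b : (n2:ℝ)*Δf ≤ (N:ℝ)*Δf := by nlinarith [show ((n2:ℝ) ≤ (N:ℝ)) from by exact_mod_cast h2.2]
  have u3a : Δf ≤ (n3:ℝ)*Δf := by nlinarith [show (1:ℝ) ≤ (n3:ℝ) from by exact_mod_cast h3.1]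
  have u3b : (n3:ℝ)*Δf ≤ (N:ℝ)*Δf := by nlinarith [show ((n3:ℝ) ≤ (N:ℝ)) from by exact_mod_cast h3.2]
  have u4a : Δf ≤ (n4:ℝ)*Δf := by nlinarith [show (1:ℝ) ≤ (n4:ℝ) from by exact_mod_cast h4.1]
  have u4b : (n4:ℝ)*Δf ≤ (N:ℝ)*Δf := by nlinarith [show ((n4:ℝ) ≤ (N:ℝ)) from by exact_mod_cast h4.2]
  have hne : ph fc Δf (n1,b1) + ph fc Δf (n2,b2) + ph fc Δf (n3,b3) + ph fc Δf (n4,b4) ≠ 0 := by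
    rcases b1 <;> rcases b2 <;> rcases b3 <;> rcases b4 <;>
      first
        | (intro hzero; norm_num [ph] at hzero; linarith)
        | norm_num at hb
  simp [KK, hne]

lemma TT_prod (a : ℕ → ℂ) (fc Δf : ℝ) (N : ℕ) (b1 b2 b3 b4 : Bool) :
    TT a fc Δf N b1 b2 b3 b4
    = ∑ r ∈ ((Finset.Icc 1 N ×ˢ Finset.Icc 1 N) ×ˢ (Finset.Icc 1 N ×ˢ Finset.Icc 1 N)),
        cc a (r.1.1,b1) * cc a (r.1.2,b2) * cc a (r.2.1,b3) * cc a (r.2.2,b4) *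
          KK (ph fc Δf (r.1.1,b1) + ph fc Δf (r.1.2,b2) + ph fc Δf (r.2.1,b3) + ph fc Δf (r.2.2,b4)) := by
  unfold TT; simp only [Finset.sum_product]

lemma TT_tftf (a : ℕ → ℂ) (fc Δf : ℝ) (N : ℕ) :
    TT a fc Δf N true false true false = TT a fc Δf N true true false false := by
  rw [TT_prod, TT_prod]
  refine Finset.sum_nbij' (fun r => ((r.1.1, r.2.1), (r.1.2, r.2.2)))
    (fun x => ((x.1.1, x.2.1), (x.1.2, x.2.2))) ?_ ?_ ?_ ?_ ?_
  · intro r hr; simp [Finset.mem_product] at hr ⊢; tauto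
  · intro r hr; simp [Finset.mem_product] at hr ⊢; tauto
  · intro r _; rfl
  · intro r _; rfl
  · intro r _
    have h : ph fc Δf (r.1.1, true) + ph fc Δf (r.1.2, false) + ph fc Δf (r.2.1, true)
        + ph fc Δf (r.2.2, false)
        = ph fc Δf (r.1.1, true) + ph fc Δf (r.2.1, true) + ph fc Δf (r.1.2, false)
        + ph fc Δf (r.2.2, false) := by ring
    rw [h]; ring

lemma TT_tfft (a : ℕ → ℂ) (fc Δf : ℝ) (N : ℕ) :
    TT a fc Δf N true false false true = TT a fc Δf N true true false false := by
  rw [TT_prod, TT_prod]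
  refine Finset.sum_nbij' (fun r => ((r.1.1, r.2.2), (r.1.2, r.2.1)))
    (fun x => ((x.1.1, x.2.1), (x.2.2, x.1.2))) ?_ ?_ ?_ ?_ ?_
  · intro r hr; simp [Finset.mem_product] at hr ⊢; tauto
  · intro r hr; simp [Finset.mem_product] at hr ⊢; tauto
  · intro r _; rfl
  · intro r _; rfl
  · intro r _
    have h : ph fc Δf (r.1.1, true) + ph fc Δf (r.1.2, false) + ph fc Δf (r.2.1, false)
        + ph fc Δf (r.2.2, true)
        = ph fc Δf (r.1.1, true) + ph fc Δf (r.2.2, true) + ph fc Δf (r.1.2, false)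
        + ph fc Δf (r.2.1, false) := by ring
    rw [h]; ring

lemma TT_fttf (a : ℕ → ℂ) (fc Δf : ℝ) (N : ℕ) :
    TT a fc Δf N false true true false = TT a fc Δf N true true false false := by
  rw [TT_prod, TT_prod]
  refine Finset.sum_nbij' (fun r => ((r.1.2, r.2.1), (r.1.1, r.2.2)))
    (fun x => ((x.2.1, x.1.1), (x.1.2, x.2.2))) ?_ ?_ ?_ ?_ ?_
  · intro r hr; simp [Finset.mem_product] at hr ⊢; tauto
  · intro r hr; simp [Finset.mem_product] at hr ⊢; tauto
  · intro r _; rfl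
  · intro r _; rfl
  · intro r _
    have h : ph fc Δf (r.1.1, false) + ph fc Δf (r.1.2, true) + ph fc Δf (r.2.1, true)
        + ph fc Δf (r.2.2, false)
        = ph fc Δf (r.1.2, true) + ph fc Δf (r.2.1, true) + ph fc Δf (r.1.1, false)
        + ph fc Δf (r.2.2, false) := by ring
    rw [h]; ring

lemma TT_ftft (a : ℕ → ℂ) (fc Δf : ℝ) (N : ℕ) :
    TT a fc Δf N false true false true = TT a fc Δf N true true false false := by
  rw [TT_prod, TT_prod]
  refine Finset.sum_nbij' (fun r => ((r.1.2, r.2.2), (r.1.1, r.2.1)))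
    (fun x => ((x.2.1, x.1.1), (x.2.2, x.1.2))) ?_ ?_ ?_ ?_ ?_
  · intro r hr; simp [Finset.mem_product] at hr ⊢; tauto
  · intro r hr; simp [Finset.mem_product] at hr ⊢; tauto
  · intro r _; rfl
  · intro r _; rfl
  · intro r _
    have h : ph fc Δf (r.1.1, false) + ph fc Δf (r.1.2, true) + ph fc Δf (r.2.1, false)
        + ph fc Δf (r.2.2, true)
        = ph fc Δf (r.1.2, true) + ph fc Δf (r.2.2, true) + ph fc Δf (r.1.1, false)
        + ph fc Δf (r.2.1, false) := by ring
    rw [h]; ring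

lemma TT_fftt (a : ℕ → ℂ) (fc Δf : ℝ) (N : ℕ) :
    TT a fc Δf N false false true true = TT a fc Δf N true true false false := by
  rw [TT_prod, TT_prod]
  refine Finset.sum_nbij' (fun r => ((r.2.1, r.2.2), (r.1.1, r.1.2)))
    (fun x => ((x.2.1, x.2.2), (x.1.1, x.1.2))) ?_ ?_ ?_ ?_ ?_
  · intro r hr; simp [Finset.mem_product] at hr ⊢; tauto
  · intro r hr; simp [Finset.mem_product] at hr ⊢; tauto
  · intro r _; rfl
  · intro r _; rfl
  · intro r _
    have h : ph fc Δf (r.1.1, false) + ph fc Δf (r.1.2, false) + ph fc Δf (r.2.1, true)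
        + ph fc Δf (r.2.2, true)
        = ph fc Δf (r.2.1, true) + ph fc Δf (r.2.2, true) + ph fc Δf (r.1.1, false)
        + ph fc Δf (r.1.2, false) := by ring
    rw [h]; ring

lemma TT_base (a : ℕ → ℂ) (fc Δf : ℝ) (N : ℕ) (hΔ : 0 < Δf) :
    TT a fc Δf N true true false false
    = (1/16) * ∑ q ∈ ((Finset.Icc 1 N ×ˢ Finset.Icc 1 N) ×ˢ
          (Finset.Icc 1 N ×ˢ Finset.Icc 1 N)).filter
          (fun q => q.1.1 + q.1.2 = q.2.1 + q.2.2),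
        a q.1.1 * a q.1.2 * (starRingEnd ℂ) (a q.2.1) * (starRingEnd ℂ) (a q.2.2) := by
  rw [Finset.sum_filter, Finset.mul_sum]
  unfold TT
  simp only [Finset.sum_product]
  refine Finset.sum_congr rfl fun n1 _ => Finset.sum_congr rfl fun n2 _ =>
    Finset.sum_congr rfl fun n3 _ => Finset.sum_congr rfl fun n4 _ => ?_
  simp only [cc, ph, KK, ite_true, ite_false, Bool.false_eq_true]
  by_cases h : n1 + n2 = n3 + n4
  · have hc : (n1:ℝ) + n2 = (n3:ℝ) + n4 := by exact_mod_cast h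
    have hx : fc + (n1:ℝ)*Δf + (fc + (n2:ℝ)*Δf) + -(fc + (n3:ℝ)*Δf) + -(fc + (n4:ℝ)*Δf) = 0 := by
      nlinarith [hc]
    rw [if_pos hx, if_pos h]; ring
  · have hx : ¬(fc + (n1:ℝ)*Δf + (fc + (n2:ℝ)*Δf) + -(fc + (n3:ℝ)*Δf) + -(fc + (n4:ℝ)*Δf) = 0) := by
      intro h0
      apply h
      have hr : ((n1:ℝ) + n2) * Δf = ((n3:ℝ) + n4) * Δf := by nlinarith [h0]
      have := mul_right_cancel₀ (ne_of_gt hΔ) hr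
      exact_mod_cast this
    rw [if_neg hx, if_neg h]; ring

lemma comb (N : ℕ) (a : ℕ → ℂ) (fc Δf : ℝ) (hΔ : 0 < Δf)
    (hfc : (N : ℝ) * Δf < fc) :
    ∑ q ∈ (((Finset.Icc 1 N) ×ˢ (Finset.univ : Finset Bool)) ×ˢ
          ((Finset.Icc 1 N) ×ˢ (Finset.univ : Finset Bool))) ×ˢ
        (((Finset.Icc 1 N) ×ˢ (Finset.univ : Finset Bool)) ×ˢ
          ((Finset.Icc 1 N) ×ˢ (Finset.univ : Finset Bool))),
        (cc a q.1.1 * cc a q.1.2 * cc a q.2.1 * cc a q.2.2) *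
          KK (ph fc Δf q.1.1 + ph fc Δf q.1.2 + ph fc Δf q.2.1 + ph fc Δf q.2.2)
    = (3 / 8) * ∑ q ∈ ((Finset.Icc 1 N ×ˢ Finset.Icc 1 N) ×ˢ
            (Finset.Icc 1 N ×ˢ Finset.Icc 1 N)).filter
            (fun q => q.1.1 + q.1.2 = q.2.1 + q.2.2),
          a q.1.1 * a q.1.2 * (starRingEnd ℂ) (a q.2.1) * (starRingEnd ℂ) (a q.2.2) := by
  have e16 : ∑ q ∈ (((Finset.Icc 1 N) ×ˢ (Finset.univ : Finset Bool)) ×ˢ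
          ((Finset.Icc 1 N) ×ˢ (Finset.univ : Finset Bool))) ×ˢ
        (((Finset.Icc 1 N) ×ˢ (Finset.univ : Finset Bool)) ×ˢ
          ((Finset.Icc 1 N) ×ˢ (Finset.univ : Finset Bool))),
        (cc a q.1.1 * cc a q.1.2 * cc a q.2.1 * cc a q.2.2) *
          KK (ph fc Δf q.1.1 + ph fc Δf q.1.2 + ph fc Δf q.2.1 + ph fc Δf q.2.2)
      = TT a fc Δf N true true true true + TT a fc Δf N true true true false
      + TT a fc Δf N true true false true + TT a fc Δf N true true false false
      + TT a fc Δf N true false true true + TT a fc Δf N true false true false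
      + TT a fc Δf N true false false true + TT a fc Δf N true false false false
      + TT a fc Δf N false true true true + TT a fc Δf N false true true false
      + TT a fc Δf N false true false true + TT a fc Δf N false true false false
      + TT a fc Δf N false false true true + TT a fc Δf N false false true false
      + TT a fc Δf N false false false true + TT a fc Δf N false false false false := by
    simp only [Finset.sum_product, Fintype.sum_bool, Finset.sum_add_distrib, TT]
    ring
  rw [e16]
  rw [TT_zero a fc Δf N hΔ hfc true true true true (by norm_num),
    TT_zero a fc Δf N hΔ hfc true true true false (by norm_num),
    TT_zero a fc Δf N hΔ hfc true true false true (by norm_num),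
    TT_zero a fc Δf N hΔ hfc true false true true (by norm_num),
    TT_zero a fc Δf N hΔ hfc true false false false (by norm_num),
    TT_zero a fc Δf N hΔ hfc false true true true (by norm_num),
    TT_zero a fc Δf N hΔ hfc false true false false (by norm_num),
    TT_zero a fc Δf N hΔ hfc false false true false (by norm_num),
    TT_zero a fc Δf N hΔ hfc false false false true (by norm_num),
    TT_zero a fc Δf N hΔ hfc false false false false (by norm_num),
    TT_tftf, TT_tfft, TT_fttf, TT_ftft, TT_fftt, TT_base a fc Δf N hΔ]
  ring

/-- The DC component of the fourth power of a multisine waveform with evenly spaced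
frequencies `fₙ = f_c + n·Δf` (with `Δf > 0` and `f_c > N·Δf`) equals
`(3/8)·Σ_{n₁+n₂=n₃+n₄} a_{n₁} a_{n₂} conj(a_{n₃}) conj(a_{n₄})`. -/
theorem stmt_4 (N : ℕ) (hN : 1 ≤ N) (a : ℕ → ℂ) (fc Δf : ℝ) (hΔ : 0 < Δf)
    (hfc : (N : ℝ) * Δf < fc) :
    Tendsto (fun T : ℝ => (((1 / T) * ∫ t in (0:ℝ)..T,
        (∑ n ∈ Finset.Icc 1 N,
          (a n * Complex.exp
            (2 * (Real.pi : ℂ) * Complex.I * ((fc + (n : ℝ) * Δf : ℝ) : ℂ) * (t : ℂ))).re) ^ 4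
        : ℝ) : ℂ))
      atTop
      (nhds ((3 / 8) * ∑ q ∈ ((Finset.Icc 1 N ×ˢ Finset.Icc 1 N) ×ˢ
            (Finset.Icc 1 N ×ˢ Finset.Icc 1 N)).filter
            (fun q => q.1.1 + q.1.2 = q.2.1 + q.2.2),
          a q.1.1 * a q.1.2 * (starRingEnd ℂ) (a q.2.1) * (starRingEnd ℂ) (a q.2.2))) := by
  set Q := (((Finset.Icc 1 N) ×ˢ (Finset.univ : Finset Bool)) ×ˢ
          ((Finset.Icc 1 N) ×ˢ (Finset.univ : Finset Bool))) ×ˢ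
        (((Finset.Icc 1 N) ×ˢ (Finset.univ : Finset Bool)) ×ˢ
          ((Finset.Icc 1 N) ×ˢ (Finset.univ : Finset Bool))) with hQ
  have hfun : ∀ T : ℝ, (((1 / T) * ∫ t in (0:ℝ)..T,
        (∑ n ∈ Finset.Icc 1 N,
          (a n * Complex.exp
            (2 * (Real.pi : ℂ) * Complex.I * ((fc + (n : ℝ) * Δf : ℝ) : ℂ) * (t : ℂ))).re) ^ 4
        : ℝ) : ℂ)
      = ∑ q ∈ Q, (cc a q.1.1 * cc a q.1.2 * cc a q.2.1 * cc a q.2.2) *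
          ((1 / (T : ℂ)) * ∫ t in (0:ℝ)..T,
            EE (ph fc Δf q.1.1 + ph fc Δf q.1.2 + ph fc Δf q.2.1 + ph fc Δf q.2.2) t) := by
    intro T
    rw [Complex.ofReal_mul, ← intervalIntegral.integral_ofReal]
    have : (∫ t in (0:ℝ)..T, ((((∑ n ∈ Finset.Icc 1 N,
          (a n * Complex.exp
            (2 * (Real.pi : ℂ) * Complex.I * ((fc + (n : ℝ) * Δf : ℝ) : ℂ) * (t : ℂ))).re) ^ 4 : ℝ)) : ℂ))
        = ∑ q ∈ Q, (cc a q.1.1 * cc a q.1.2 * cc a q.2.1 * cc a q.2.2) *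
          (∫ t in (0:ℝ)..T,
            EE (ph fc Δf q.1.1 + ph fc Δf q.1.2 + ph fc Δf q.2.1 + ph fc Δf q.2.2) t) := by
      rw [intervalIntegral.integral_congr (g := fun t => ∑ q ∈ Q,
          (cc a q.1.1 * cc a q.1.2 * cc a q.2.1 * cc a q.2.2) *
            EE (ph fc Δf q.1.1 + ph fc Δf q.1.2 + ph fc Δf q.2.1 + ph fc Δf q.2.2) t)
          (fun t _ => point N a fc Δf t)]
      rw [intervalIntegral.integral_finset_sum]
      · exact Finset.sum_congr rfl fun q _ => intervalIntegral.integral_const_mul _ _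
      · intro q _
        exact (continuous_const.mul (EE_cont _)).intervalIntegrable _ _
    rw [this, Finset.mul_sum]
    push_cast
    exact Finset.sum_congr rfl fun q _ => by ring
  rw [← comb N a fc Δf hΔ hfc]
  refine Tendsto.congr (fun T => (hfun T).symm) ?_
  exact tendsto_finset_sum _ fun q _ => (avg_EE _).const_mul _
end

section
/- Let N ≥ 1, let h : {1,…,N} → ℂ^M with each h_n ≠ 0, let s : {1,…,N} → ℝ with s_n ≥ 0, and let w : {1,…,N} → ℂ^M satisfy ‖w_n‖ ≤ s_n for all n. Then Re( Σ_{(n₁,n₂,n₃,n₄): n₁+n₂=n₃+n₄} (h_{n₁}ᴴw_{n₁})·(h_{n₂}ᴴw_{n₂})·conj(h_{n₃}ᴴw_{n₃})·conj(h_{n₄}ᴴw_{n₄}) ) ≤ Σ_{(n₁,n₂,n₃,n₄): n₁+n₂=n₃+n₄} ‖h_{n₁}‖s_{n₁}·‖h_{n₂}‖s_{n₂}·‖h_{n₃}‖s_{n₃}·‖h_{n₄}‖s_{n₄}, where both sums range over quadruples in {1,…,N}⁴ with n₁+n₂ = n₃+n₄, and equality holds for the maximum-ratio transmission precoders w_n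 = s_n·h_n/‖h_n‖. -/
lemma auxCS (M : ℕ) (x y : EuclideanSpace ℂ (Fin M)) :
    ‖∑ i, (starRingEnd ℂ) (x i) * y i‖ ≤ ‖x‖ * ‖y‖ := by
  have := @norm_inner_le_norm ℂ _ _ _ _ x y
  simpa [PiLp.inner_apply, RCLike.inner_apply', mul_comm] using this

lemma auxMRT (M : ℕ) (x : EuclideanSpace ℂ (Fin M)) (hx : x ≠ 0) (c : ℝ) :
    (∑ i, (starRingEnd ℂ) (x i) * ((c / ‖x‖) • x) i) = ((‖x‖ * c : ℝ) : ℂ) := by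
  have h2 : (inner ℂ x x : ℂ) = ((‖x‖ ^ 2 : ℝ) : ℂ) := by
    rw [inner_self_eq_norm_sq_to_K]; norm_num
  have h3 : (∑ i, (starRingEnd ℂ) (x i) * ((c / ‖x‖) • x) i)
      = ((c / ‖x‖ : ℝ) : ℂ) * (inner ℂ x x : ℂ) := by
    simp only [PiLp.inner_apply, RCLike.inner_apply', PiLp.smul_apply, Complex.real_smul,
      Finset.mul_sum]
    congr 1; ext i; ring
  rw [h3, h2]
  have hn : ‖x‖ ≠ 0 := norm_ne_zero_iff.mpr hx
  have hn' : (‖x‖ : ℂ) ≠ 0 := by exact_mod_cast hn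
  push_cast
  field_simp


/-- The real part of the fourth-order quadruple sum of received-signal inner products
`h_nᴴw_n` is upper bounded by the corresponding sum with `|h_nᴴw_n|` replaced by
`‖h_n‖·s_n`, whenever `‖w_n‖ ≤ s_n`; equality holds for the maximum-ratio transmission
precoders `w_n = s_n·h_n/‖h_n‖`. -/
theorem stmt_14 (N M : ℕ) (hN : 1 ≤ N)
    (h : ℕ → EuclideanSpace ℂ (Fin M)) (hne : ∀ n ∈ Finset.Icc 1 N, h n ≠ 0)
    (s : ℕ → ℝ) (hs : ∀ n ∈ Finset.Icc 1 N, 0 ≤ s n)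
    (w : ℕ → EuclideanSpace ℂ (Fin M)) (hw : ∀ n ∈ Finset.Icc 1 N, ‖w n‖ ≤ s n) :
    (∑ q ∈ ((Finset.Icc 1 N ×ˢ Finset.Icc 1 N) ×ˢ
          (Finset.Icc 1 N ×ˢ Finset.Icc 1 N)).filter
          (fun q => q.1.1 + q.1.2 = q.2.1 + q.2.2),
        (∑ i, (starRingEnd ℂ) (h q.1.1 i) * w q.1.1 i) *
        (∑ i, (starRingEnd ℂ) (h q.1.2 i) * w q.1.2 i) *
        (starRingEnd ℂ) (∑ i, (starRingEnd ℂ) (h q.2.1 i) * w q.2.1 i) *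
        (starRingEnd ℂ) (∑ i, (starRingEnd ℂ) (h q.2.2 i) * w q.2.2 i)).re
      ≤ ∑ q ∈ ((Finset.Icc 1 N ×ˢ Finset.Icc 1 N) ×ˢ
          (Finset.Icc 1 N ×ˢ Finset.Icc 1 N)).filter
          (fun q => q.1.1 + q.1.2 = q.2.1 + q.2.2),
        (‖h q.1.1‖ * s q.1.1) * (‖h q.1.2‖ * s q.1.2) *
        (‖h q.2.1‖ * s q.2.1) * (‖h q.2.2‖ * s q.2.2) ∧
    (∑ q ∈ ((Finset.Icc 1 N ×ˢ Finset.Icc 1 N) ×ˢ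
          (Finset.Icc 1 N ×ˢ Finset.Icc 1 N)).filter
          (fun q => q.1.1 + q.1.2 = q.2.1 + q.2.2),
        (∑ i, (starRingEnd ℂ) (h q.1.1 i) * ((s q.1.1 / ‖h q.1.1‖) • h q.1.1) i) *
        (∑ i, (starRingEnd ℂ) (h q.1.2 i) * ((s q.1.2 / ‖h q.1.2‖) • h q.1.2) i) *
        (starRingEnd ℂ) (∑ i, (starRingEnd ℂ) (h q.2.1 i) * ((s q.2.1 / ‖h q.2.1‖) • h q.2.1) i) *
        (starRingEnd ℂ) (∑ i, (starRingEnd ℂ) (h q.2.2 i) * ((s q.2.2 / ‖h q.2.2‖) • h q.2.2) i)).re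
      = ∑ q ∈ ((Finset.Icc 1 N ×ˢ Finset.Icc 1 N) ×ˢ
          (Finset.Icc 1 N ×ˢ Finset.Icc 1 N)).filter
          (fun q => q.1.1 + q.1.2 = q.2.1 + q.2.2),
        (‖h q.1.1‖ * s q.1.1) * (‖h q.1.2‖ * s q.1.2) *
        (‖h q.2.1‖ * s q.2.1) * (‖h q.2.2‖ * s q.2.2) := by
  constructor
  · rw [Complex.re_sum]
    apply Finset.sum_le_sum
    intro q hq
    simp only [Finset.mem_filter, Finset.mem_product] at hq
    obtain ⟨⟨⟨m1, m2⟩, m3, m4⟩, -⟩ := hq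
    have key : ∀ n ∈ Finset.Icc 1 N,
        ‖∑ i, (starRingEnd ℂ) (h n i) * w n i‖ ≤ ‖h n‖ * s n := by
      intro n hn
      calc ‖∑ i, (starRingEnd ℂ) (h n i) * w n i‖
          ≤ ‖h n‖ * ‖w n‖ := auxCS M (h n) (w n)
        _ ≤ ‖h n‖ * s n := by
            exact mul_le_mul_of_nonneg_left (hw n hn) (norm_nonneg _)
    calc ((∑ i, (starRingEnd ℂ) (h q.1.1 i) * w q.1.1 i) *
        (∑ i, (starRingEnd ℂ) (h q.1.2 i) * w q.1.2 i) *
        (starRingEnd ℂ) (∑ i, (starRingEnd ℂ) (h q.2.1 i) * w q.2.1 i) *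
        (starRingEnd ℂ) (∑ i, (starRingEnd ℂ) (h q.2.2 i) * w q.2.2 i)).re
        ≤ ‖(∑ i, (starRingEnd ℂ) (h q.1.1 i) * w q.1.1 i) *
            (∑ i, (starRingEnd ℂ) (h q.1.2 i) * w q.1.2 i) *
            (starRingEnd ℂ) (∑ i, (starRingEnd ℂ) (h q.2.1 i) * w q.2.1 i) *
            (starRingEnd ℂ) (∑ i, (starRingEnd ℂ) (h q.2.2 i) * w q.2.2 i)‖ :=
          Complex.re_le_norm _
      _ = ‖∑ i, (starRingEnd ℂ) (h q.1.1 i) * w q.1.1 i‖ *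
          ‖∑ i, (starRingEnd ℂ) (h q.1.2 i) * w q.1.2 i‖ *
          ‖∑ i, (starRingEnd ℂ) (h q.2.1 i) * w q.2.1 i‖ *
          ‖∑ i, (starRingEnd ℂ) (h q.2.2 i) * w q.2.2 i‖ := by
          rw [norm_mul, norm_mul, norm_mul, Complex.norm_conj, Complex.norm_conj]
      _ ≤ (‖h q.1.1‖ * s q.1.1) * (‖h q.1.2‖ * s q.1.2) *
          (‖h q.2.1‖ * s q.2.1) * (‖h q.2.2‖ * s q.2.2) := by
          have hb : ∀ n ∈ Finset.Icc 1 N, 0 ≤ ‖h n‖ * s n := fun n hn =>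
            mul_nonneg (norm_nonneg _) (hs n hn)
          gcongr <;> first
            | exact mul_nonneg (mul_nonneg (hb _ m1) (hb _ m2)) (hb _ m3)
            | exact mul_nonneg (hb _ m1) (hb _ m2)
            | exact hb _ m1
            | exact key _ m1 | exact key _ m2 | exact key _ m3 | exact key _ m4
  · rw [Complex.re_sum]
    apply Finset.sum_congr rfl
    intro q hq
    simp only [Finset.mem_filter, Finset.mem_product] at hq
    obtain ⟨⟨⟨m1, m2⟩, m3, m4⟩, -⟩ := hq
    rw [auxMRT M (h q.1.1) (hne _ m1) (s q.1.1), auxMRT M (h q.1.2) (hne _ m2) (s q.1.2),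
      auxMRT M (h q.2.1) (hne _ m3) (s q.2.1), auxMRT M (h q.2.2) (hne _ m4) (s q.2.2)]
    simp [Complex.conj_ofReal, ← Complex.ofReal_mul]
end

section
/- Let N ≥ 1, and let β₂, β₄, P ≥ 0 and g ≥ 0 be real numbers. Suppose each of the N tones has channel amplitude g and multisine amplitude s = √(2P/N). Then β₂·(1/2)·Σ_{n=1}^{N} g²s² + β₄·(3/8)·Σ_{(n₁,n₂,n₃,n₄): n₁+n₂=n₃+n₄} g⁴s⁴ = β₂·g²·P + β₄·((2N² + 1)/(2N))·g⁴·P², where the second sum ranges over quadruples in {1,…,N}⁴ with n₁+n₂ = n₃+n₄. -/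
lemma icc_ins (n : ℕ) : Finset.Icc 1 (n + 1) = insert (n + 1) (Finset.Icc 1 n) := by
  ext x; simp [Finset.mem_Icc, Finset.mem_insert]; omega

lemma gauss (M : ℕ) : 2 * ∑ i ∈ Finset.Icc 1 M, i = M * (M + 1) := by
  induction M with
  | zero => simp
  | succ n ih =>
    rw [icc_ins, Finset.sum_insert (by simp)]
    ring_nf; ring_nf at ih; linarith

lemma fiber_card (N a c : ℕ) :
    ((Finset.Icc 1 N ×ˢ Finset.Icc 1 N).filter (fun bd : ℕ × ℕ => a + bd.1 = c + bd.2)).card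
      = N - (max a c - min a c) := by
  have hset : (Finset.Icc 1 N ×ˢ Finset.Icc 1 N).filter (fun bd : ℕ × ℕ => a + bd.1 = c + bd.2)
      = (Finset.Icc 1 (N - (max a c - min a c))).image (fun t => (t + (c - a), t + (a - c))) := by
    ext ⟨b, d⟩
    simp only [Finset.mem_filter, Finset.mem_product, Finset.mem_Icc, Finset.mem_image,
      Prod.mk.injEq]
    constructor
    · rintro ⟨⟨⟨hb1, hb2⟩, hd1, hd2⟩, he⟩
      exact ⟨min b d, by omega, by omega, by omega⟩
    · rintro ⟨t, ht, h1, h2⟩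
      omega
  rw [hset, Finset.card_image_of_injective, Nat.card_Icc]
  · omega
  · intro t1 t2 h
    have := congrArg Prod.fst h
    simp at this; omega

lemma card_as_sum (N : ℕ) :
    (((Finset.Icc 1 N ×ˢ Finset.Icc 1 N) ×ˢ (Finset.Icc 1 N ×ˢ Finset.Icc 1 N)).filter
        (fun q => q.1.1 + q.1.2 = q.2.1 + q.2.2)).card
      = ∑ a ∈ Finset.Icc 1 N, ∑ c ∈ Finset.Icc 1 N, (N - (max a c - min a c)) := by
  rw [Finset.card_filter]
  simp only [Finset.sum_product]
  refine Finset.sum_congr rfl fun a _ => ?_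
  rw [Finset.sum_comm]
  refine Finset.sum_congr rfl fun c _ => ?_
  rw [← Finset.sum_product', ← fiber_card N a c, Finset.card_filter]

lemma T_val (N : ℕ) :
    3 * ∑ a ∈ Finset.Icc 1 N, ∑ c ∈ Finset.Icc 1 N, (N - (max a c - min a c))
      = 2 * N ^ 3 + N := by
  induction N with
  | zero => simp
  | succ n ih =>
    have hstep : ∑ a ∈ Finset.Icc 1 (n+1), ∑ c ∈ Finset.Icc 1 (n+1), ((n+1) - (max a c - min a c))
        = (∑ a ∈ Finset.Icc 1 n, ∑ c ∈ Finset.Icc 1 n, (n - (max a c - min a c)))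
          + n^2 + (∑ c ∈ Finset.Icc 1 (n+1), c) + (∑ a ∈ Finset.Icc 1 n, a) := by
      rw [icc_ins, Finset.sum_insert (by simp)]
      have h1 : ∑ c ∈ insert (n+1) (Finset.Icc 1 n), ((n+1) - (max (n+1) c - min (n+1) c))
          = ∑ c ∈ insert (n+1) (Finset.Icc 1 n), c := by
        refine Finset.sum_congr rfl fun c hc => ?_
        simp only [Finset.mem_insert, Finset.mem_Icc] at hc; omega
      rw [h1]
      have h2 : ∀ a ∈ Finset.Icc 1 n,
          ∑ c ∈ insert (n+1) (Finset.Icc 1 n), ((n+1) - (max a c - min a c))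
          = (∑ c ∈ Finset.Icc 1 n, (n - (max a c - min a c))) + n + a := by
        intro a ha
        simp only [Finset.mem_Icc] at ha
        rw [Finset.sum_insert (by simp)]
        have hm : (n+1) - (max a (n+1) - min a (n+1)) = a := by omega
        rw [hm]
        have h3 : ∑ c ∈ Finset.Icc 1 n, ((n+1) - (max a c - min a c))
            = ∑ c ∈ Finset.Icc 1 n, ((n - (max a c - min a c)) + 1) := by
          refine Finset.sum_congr rfl fun c hc => ?_
          simp only [Finset.mem_Icc] at hc; omega
        rw [h3, Finset.sum_add_distrib]
        simp [Nat.card_Icc]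
        omega
      rw [Finset.sum_congr rfl h2, Finset.sum_add_distrib, Finset.sum_add_distrib]
      simp [Nat.card_Icc]
      ring_nf
    rw [hstep]
    have g1 := gauss (n+1)
    have g2 := gauss n
    ring_nf
    ring_nf at ih g1 g2
    linarith

lemma quad_card (N : ℕ) :
    3 * (((Finset.Icc 1 N ×ˢ Finset.Icc 1 N) ×ˢ (Finset.Icc 1 N ×ˢ Finset.Icc 1 N)).filter
        (fun q => q.1.1 + q.1.2 = q.2.1 + q.2.2)).card = 2 * N ^ 3 + N := by
  rw [card_as_sum]; exact T_val N

/-- For a frequency-flat channel with per-tone amplitude `g` and uniform multisine power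
allocation `s = √(2P/N)`, the truncated nonlinear harvester DC output equals
`β₂ g² P + β₄ ((2N²+1)/(2N)) g⁴ P²`. -/
theorem stmt_18 (N : ℕ) (hN : 1 ≤ N) (β₂ β₄ P g : ℝ)
    (hβ₂ : 0 ≤ β₂) (hβ₄ : 0 ≤ β₄) (hP : 0 ≤ P) (hg : 0 ≤ g) :
    let s : ℝ := Real.sqrt (2 * P / N)
    β₂ * (1 / 2) * (∑ _n ∈ Finset.Icc 1 N, g ^ 2 * s ^ 2)
      + β₄ * (3 / 8) * (∑ _q ∈ ((Finset.Icc 1 N ×ˢ Finset.Icc 1 N) ×ˢ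
            (Finset.Icc 1 N ×ˢ Finset.Icc 1 N)).filter
            (fun q => q.1.1 + q.1.2 = q.2.1 + q.2.2),
          g ^ 4 * s ^ 4)
    = β₂ * g ^ 2 * P + β₄ * ((2 * (N : ℝ) ^ 2 + 1) / (2 * N)) * g ^ 4 * P ^ 2 := by
  intro s
  have hNR : (N : ℝ) ≠ 0 := by positivity
  have hs2 : s ^ 2 = 2 * P / N := Real.sq_sqrt (by positivity)
  have hs4 : s ^ 4 = (2 * P / N) ^ 2 := by
    rw [show s ^ 4 = (s ^ 2) ^ 2 by ring, hs2]
  set C := (((Finset.Icc 1 N ×ˢ Finset.Icc 1 N) ×ˢ (Finset.Icc 1 N ×ˢ Finset.Icc 1 N)).filter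
      (fun q => q.1.1 + q.1.2 = q.2.1 + q.2.2)).card with hCdef
  have hC : 3 * (C : ℝ) = 2 * (N : ℝ) ^ 3 + N := by
    have := quad_card N
    rw [hCdef]
    exact_mod_cast this
  rw [Finset.sum_const, Finset.sum_const, ← hCdef, Nat.card_Icc, hs2, hs4]
  have hcard : (N + 1 - 1 : ℕ) = N := by omega
  rw [hcard]
  simp only [nsmul_eq_mul]
  push_cast
  field_simp
  linear_combination (8 * g ^ 4 * P ^ 2 * β₄) * hC
end
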